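/- Let h be an m×m Hermitian matrix, g an m×m symmetric matrix, and set A = [[h,g],[ḡ,h̄]], B = AS with S = diag(I,-I). If A > 0 (positive definite), then B has only real nonzero eigenvalues. -/

import Mathlib

open Matrix
open scoped ComplexOrder

private lemma herm_dot_real {n : Type*} [Fintype n] {M : Matrix n n ℂ} (hM : Mᴴ = M)
    (v : n → ℂ) : star (star v ⬝ᵥ (M *ᵥ v)) = star v ⬝ᵥ (M *ᵥ v) := by
  have h1 : star (star v ⬝ᵥ (M *ᵥ v)) = star (M *ᵥ v) ⬝ᵥ v := by
    rw [Matrix.star_dotProduct, star_star]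
  rw [h1, Matrix.star_mulVec, hM, ← Matrix.dotProduct_mulVec]

/-- Let `h` be an `m×m` Hermitian matrix, `g` an `m×m` symmetric matrix,
and set `A = [[h,g],[ḡ,h̄]]`, `B = A*S` with `S = diag(1,-1)`.  If `A > 0`
(positive definite), then `B` has only real nonzero eigenvalues. -/
theorem symplectic_generator_real_nonzero_spectrum {m : ℕ}
    (h g : Matrix (Fin m) (Fin m) ℂ)
    (hh : hᴴ = h) (hg : gᵀ = g)
    (hA : (Matrix.fromBlocks h g (g.map (starRingEnd ℂ)) (h.map (starRingEnd ℂ))).PosDef) :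
    ∀ μ ∈ spectrum ℂ
        (Matrix.fromBlocks h g (g.map (starRingEnd ℂ)) (h.map (starRingEnd ℂ)) *
          Matrix.fromBlocks 1 0 0 (-1)),
      μ.im = 0 ∧ μ ≠ 0 := by
  intro μ hμ
  set A : Matrix (Fin m ⊕ Fin m) (Fin m ⊕ Fin m) ℂ :=
    Matrix.fromBlocks h g (g.map (starRingEnd ℂ)) (h.map (starRingEnd ℂ)) with hAdef
  set S : Matrix (Fin m ⊕ Fin m) (Fin m ⊕ Fin m) ℂ :=
    Matrix.fromBlocks 1 0 0 (-1) with hSdef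
  have hSS : S * S = 1 := by
    rw [hSdef, Matrix.fromBlocks_multiply]
    simp [← Matrix.fromBlocks_one]
  have hSh : Sᴴ = S := by
    rw [hSdef]
    simp [Matrix.fromBlocks_conjTranspose]
  have hAh : Aᴴ = A := hA.1
  -- extract an eigenvector
  rw [spectrum.mem_iff, Matrix.isUnit_iff_isUnit_det, isUnit_iff_ne_zero, not_not] at hμ
  obtain ⟨v, hv, hveq⟩ := Matrix.exists_mulVec_eq_zero_iff.mpr hμ
  have hBv : (A * S) *ᵥ v = μ • v := by
    have h1 : (algebraMap ℂ (Matrix (Fin m ⊕ Fin m) (Fin m ⊕ Fin m) ℂ) μ) *ᵥ v = μ • v := by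
      simp [Algebra.algebraMap_eq_smul_one, Matrix.smul_mulVec]
    rw [Matrix.sub_mulVec, h1] at hveq
    exact (sub_eq_zero.mp hveq).symm
  have hw : S *ᵥ v ≠ 0 := by
    intro hcon
    apply hv
    have h2 : S *ᵥ (S *ᵥ v) = v := by rw [Matrix.mulVec_mulVec, hSS, Matrix.one_mulVec]
    rw [hcon, Matrix.mulVec_zero] at h2
    exact h2.symm
  have hq : 0 < star (S *ᵥ v) ⬝ᵥ (A *ᵥ (S *ᵥ v)) := hA.dotProduct_mulVec_pos hw
  set q : ℂ := star (S *ᵥ v) ⬝ᵥ (A *ᵥ (S *ᵥ v)) with hqdef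
  have hq' : q = star v ⬝ᵥ ((S * A * S) *ᵥ v) := by
    rw [hqdef, Matrix.star_mulVec, hSh, ← Matrix.dotProduct_mulVec,
      Matrix.mulVec_mulVec, Matrix.mulVec_mulVec]
  -- the key real quantity
  set P : Matrix (Fin m ⊕ Fin m) (Fin m ⊕ Fin m) ℂ := S * A * S * (A * S) with hPdef
  have hPh : Pᴴ = P := by
    rw [hPdef]
    simp only [Matrix.conjTranspose_mul, hSh, hAh, Matrix.mul_assoc]
  have hz : star v ⬝ᵥ (P *ᵥ v) = μ * q := by
    rw [hPdef, ← Matrix.mulVec_mulVec, hBv, Matrix.mulVec_smul, dotProduct_smul,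
      smul_eq_mul, hq']
  have hzreal : star (μ * q) = μ * q := by
    rw [← hz]; exact herm_dot_real hPh v
  have hqre : q = (q.re : ℂ) ∧ 0 < q.re := by
    rcases (Complex.lt_def.mp hq) with ⟨h1, h2⟩
    simp only [Complex.zero_re, Complex.zero_im] at h1 h2
    exact ⟨Complex.ext (by simp) (by simp [← h2]), h1⟩
  have hqne : q ≠ 0 := by
    intro hcon; rw [hcon] at hq; exact lt_irrefl _ hq
  constructor
  · -- μ is real
    have him : (μ * q).im = 0 := by
      have := congrArg Complex.im hzreal
      simp only [Complex.star_def, Complex.conj_im] at this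
      linarith
    rw [hqre.1] at him
    simp only [Complex.mul_im, Complex.ofReal_re, Complex.ofReal_im, mul_zero, add_zero, zero_add] at him
    rcases mul_eq_zero.mp him with h'|h'
    · exact h'
    · exact absurd h' (ne_of_gt hqre.2)
  · -- μ ≠ 0
    intro hcon
    apply hqne
    have h3 : A *ᵥ (S *ᵥ v) = 0 := by
      rw [Matrix.mulVec_mulVec, hBv, hcon, zero_smul]
    rw [hqdef, h3, dotProduct_zero]
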